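/- arXiv:2404.13585 — 5 statements merged into one kernel-verified Lean document; each statement's English description precedes it below -/
import Mathlib

section
/- Let $H_1, H_2$ be $n\times n$ complex Hermitian matrices. Suppose $v:\mathbb{R}\times\mathbb{R}\to\mathbb{C}^n$ is continuously differentiable, satisfies the warped phase system $\partial_t v(t,p) = -H_1\,\partial_p v(t,p) + i H_2\, v(t,p)$ pointwise, and for every compact time interval $I$ there is a compact set $K\subset\mathbb{R}$ such that $v(t,p)=0$ whenever $t\in I$ and $p\notin K$. Then the $L^2$ norm in $p$ is conserved: $\int_{\mathbb{R}} \|v(t,p)\|^2\,dp = \int_{\mathbb{R}} \|v(0,p)\|^2\,dp$ for all $t\in\mathbb{R}$, where $\|\cdot\|$ is the Euclidean norm on $\mathbb{C}^n$. -/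
open Matrix MeasureTheory Metric Set

lemma hasDerivAt_conj' {u : ℝ → ℂ} {u' : ℂ} {t : ℝ} (h : HasDerivAt u u' t) :
    HasDerivAt (fun s => (starRingEnd ℂ) (u s)) ((starRingEnd ℂ) u') t := by
  simpa [Function.comp_def] using
    ((Complex.conjCLE.toContinuousLinearMap.hasFDerivAt (x := u t)).comp_hasDerivAt t h)

lemma hasDerivAt_re' {u : ℝ → ℂ} {u' : ℂ} {t : ℝ} (h : HasDerivAt u u' t) :
    HasDerivAt (fun s => (u s).re) u'.re t := by
  simpa [Function.comp_def] using ((Complex.reCLM.hasFDerivAt (x := u t)).comp_hasDerivAt t h)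

lemma hasDerivAt_normSq' {u : ℝ → ℂ} {u' : ℂ} {t : ℝ} (h : HasDerivAt u u' t) :
    HasDerivAt (fun s => Complex.normSq (u s)) (2 * ((starRingEnd ℂ) (u t) * u').re) t := by
  have h2 := hasDerivAt_re' ((hasDerivAt_conj' h).mul h)
  have e1 : ∀ s, ((starRingEnd ℂ) (u s) * u s).re = Complex.normSq (u s) := by
    intro s; rw [← Complex.normSq_eq_conj_mul_self]; simp
  have e2 : ((starRingEnd ℂ) u' * u t + (starRingEnd ℂ) (u t) * u').re
      = 2 * ((starRingEnd ℂ) (u t) * u').re := by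
    have : (starRingEnd ℂ) u' * u t = (starRingEnd ℂ) ((starRingEnd ℂ) (u t) * u') := by
      simp [mul_comm]
    rw [this, Complex.add_re, Complex.conj_re]; ring
  simp only [Pi.mul_apply, e1, e2] at h2
  exact h2

lemma herm_sum {n : ℕ} {H : Matrix (Fin n) (Fin n) ℂ} (hH : H.IsHermitian)
    (a b : Fin n → ℂ) :
    ∑ i, (starRingEnd ℂ) ((H.mulVec a) i) * b i
      = ∑ i, (starRingEnd ℂ) (a i) * (H.mulVec b) i := by
  have hij : ∀ i j, (starRingEnd ℂ) (H i j) = H j i := by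
    intro i j
    have := congrFun (congrFun hH.eq j) i
    simpa [Matrix.conjTranspose_apply] using this
  simp only [Matrix.mulVec, dotProduct, map_sum, _root_.map_mul, Finset.sum_mul,
    Finset.mul_sum, hij]
  rw [Finset.sum_comm]
  apply Finset.sum_congr rfl; intro i _
  apply Finset.sum_congr rfl; intro j _
  ring

lemma hasDerivAt_mulVec' {n : ℕ} (H : Matrix (Fin n) (Fin n) ℂ) {u : ℝ → Fin n → ℂ}
    {u' : Fin n → ℂ} {t : ℝ} (h : ∀ j, HasDerivAt (fun s => u s j) (u' j) t) (i : Fin n) :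
    HasDerivAt (fun s => H.mulVec (u s) i) (H.mulVec u' i) t := by
  simp only [Matrix.mulVec, dotProduct]
  exact HasDerivAt.fun_sum fun j _ => (h j).const_mul (H i j)

/-- The Euclidean norm on `Fin n → ℂ`. -/
noncomputable def euclNorm {n : ℕ} (x : Fin n → ℂ) : ℝ :=
  Real.sqrt (∑ i, ‖x i‖ ^ 2)

/-- a `C¹` solution of the warped phase system
`∂ₜ v = -H₁ ∂ₚ v + i H₂ v` (with `H₁, H₂` Hermitian) that is compactly supported
in `p`, locally uniformly in `t`, conserves the `L²` norm in `p`. -/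
theorem stmt1 {n : ℕ} (H1 H2 : Matrix (Fin n) (Fin n) ℂ)
    (hH1 : H1.IsHermitian) (hH2 : H2.IsHermitian)
    (v : ℝ → ℝ → Fin n → ℂ)
    (hreg : ContDiff ℝ 1 (fun q : ℝ × ℝ => v q.1 q.2))
    (hpde : ∀ t p : ℝ, deriv (fun τ => v τ p) t
        = - H1.mulVec (deriv (fun q => v t q) p) + Complex.I • H2.mulVec (v t p))
    (hsupp : ∀ I : Set ℝ, IsCompact I → ∃ K : Set ℝ, IsCompact K ∧
        ∀ t ∈ I, ∀ p ∉ K, v t p = 0) :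
    ∀ t : ℝ, ∫ p : ℝ, (euclNorm (v t p)) ^ 2 = ∫ p : ℝ, (euclNorm (v 0 p)) ^ 2 := by
  classical
  set V : ℝ × ℝ → Fin n → ℂ := fun q => v q.1 q.2 with hVdef
  have hVdiff : Differentiable ℝ V := hreg.differentiable one_ne_zero
  set vt : ℝ → ℝ → Fin n → ℂ := fun t p => fderiv ℝ V (t, p) (1, 0) with hvtdef
  set vp : ℝ → ℝ → Fin n → ℂ := fun t p => fderiv ℝ V (t, p) (0, 1) with hvpdef
  -- partial derivatives
  have hvt : ∀ t p, HasDerivAt (fun τ => v τ p) (vt t p) t := by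
    intro t p
    have hc : HasDerivAt (fun τ : ℝ => ((τ, p) : ℝ × ℝ)) ((1 : ℝ), (0 : ℝ)) t :=
      HasDerivAt.prodMk (hasDerivAt_id t) (hasDerivAt_const t p)
    exact ((hVdiff (t, p)).hasFDerivAt).comp_hasDerivAt t hc
  have hvp : ∀ t p, HasDerivAt (fun q => v t q) (vp t p) p := by
    intro t p
    have hc : HasDerivAt (fun q : ℝ => ((t, q) : ℝ × ℝ)) ((0 : ℝ), (1 : ℝ)) p :=
      HasDerivAt.prodMk (hasDerivAt_const p t) (hasDerivAt_id p)
    exact ((hVdiff (t, p)).hasFDerivAt).comp_hasDerivAt p hc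
  have hvti : ∀ t p (i : Fin n), HasDerivAt (fun τ => v τ p i) (vt t p i) t := by
    intro t p i
    simpa [Function.comp_def] using
      ((ContinuousLinearMap.proj (R := ℝ) (φ := fun _ : Fin n => ℂ) i).hasFDerivAt
        (x := v t p)).comp_hasDerivAt t (hvt t p)
  have hvpi : ∀ t p (i : Fin n), HasDerivAt (fun q => v t q i) (vp t p i) p := by
    intro t p i
    simpa [Function.comp_def] using
      ((ContinuousLinearMap.proj (R := ℝ) (φ := fun _ : Fin n => ℂ) i).hasFDerivAt
        (x := v t p)).comp_hasDerivAt p (hvp t p)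
  -- PDE in terms of vt, vp
  have hpde' : ∀ t p, vt t p = - H1.mulVec (vp t p) + Complex.I • H2.mulVec (v t p) := by
    intro t p
    have h := hpde t p
    rwa [(hvt t p).deriv, (hvp t p).deriv] at h
  -- continuity
  have hv_cont : Continuous V := hreg.continuous
  have hfd_cont : Continuous (fun q => fderiv ℝ V q) := hreg.continuous_fderiv one_ne_zero
  have hvt_cont : Continuous (fun q : ℝ × ℝ => vt q.1 q.2) :=
    hfd_cont.clm_apply continuous_const
  have hvp_cont : Continuous (fun q : ℝ × ℝ => vp q.1 q.2) :=
    hfd_cont.clm_apply continuous_const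
  have hvi_cont : ∀ i : Fin n, Continuous (fun q : ℝ × ℝ => v q.1 q.2 i) := fun i =>
    (continuous_apply i).comp hv_cont
  have hvti_cont : ∀ i : Fin n, Continuous (fun q : ℝ × ℝ => vt q.1 q.2 i) := fun i =>
    (continuous_apply i).comp hvt_cont
  have hvpi_cont : ∀ i : Fin n, Continuous (fun q : ℝ × ℝ => vp q.1 q.2 i) := fun i =>
    (continuous_apply i).comp hvp_cont
  have hmv_cont : ∀ (H : Matrix (Fin n) (Fin n) ℂ) (u : ℝ × ℝ → Fin n → ℂ),
      Continuous u → ∀ i : Fin n, Continuous (fun q => H.mulVec (u q) i) := by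
    intro H u hu i
    simp only [Matrix.mulVec, dotProduct]
    exact continuous_finset_sum _ fun j _ => continuous_const.mul ((continuous_apply j).comp hu)
  -- density and flux
  set f : ℝ → ℝ → ℝ := fun t p => ∑ i, Complex.normSq (v t p i) with hfdef
  set ft : ℝ → ℝ → ℝ :=
    fun t p => ∑ i, 2 * ((starRingEnd ℂ) (v t p i) * vt t p i).re with hftdef
  set g : ℝ → ℝ → ℝ :=
    fun t p => ∑ i, ((starRingEnd ℂ) (v t p i) * (H1.mulVec (v t p)) i).re with hgdef
  set gp : ℝ → ℝ → ℝ := fun t p => ∑ i,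
      ((starRingEnd ℂ) (vp t p i) * (H1.mulVec (v t p)) i
        + (starRingEnd ℂ) (v t p i) * (H1.mulVec (vp t p)) i).re with hgpdef
  have hft : ∀ t p, HasDerivAt (fun τ => f τ p) (ft t p) t := by
    intro t p
    exact HasDerivAt.fun_sum fun i _ => hasDerivAt_normSq' (hvti t p i)
  have hgp : ∀ t p, HasDerivAt (fun q => g t q) (gp t p) p := by
    intro t p
    exact HasDerivAt.fun_sum fun i _ => hasDerivAt_re'
      ((hasDerivAt_conj' (hvpi t p i)).mul (hasDerivAt_mulVec' H1 (fun j => hvpi t p j) i))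
  -- key identity: ft = -gp
  have key : ∀ t p, ft t p = - gp t p := by
    intro t p
    have hw := hpde' t p
    set a := v t p with ha
    set w := vp t p with hwdef
    set U : ℂ := ∑ i, (starRingEnd ℂ) (a i) * (H1.mulVec w) i with hU
    set S : ℂ := ∑ i, (starRingEnd ℂ) (a i) * (H2.mulVec a) i with hS
    have hUconj : (starRingEnd ℂ) U = ∑ i, (starRingEnd ℂ) (w i) * (H1.mulVec a) i := by
      rw [hU, map_sum, ← herm_sum hH1 w a]
      apply Finset.sum_congr rfl; intro i _
      rw [_root_.map_mul, Complex.conj_conj]; ring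
    have hSreal : S.im = 0 := by
      apply Complex.conj_eq_iff_im.mp
      rw [hS, map_sum, ← herm_sum hH2 a a]
      apply Finset.sum_congr rfl; intro i _
      rw [_root_.map_mul, Complex.conj_conj]; ring
    have hterm : ∀ i : Fin n, 2 * ((starRingEnd ℂ) (a i) * vt t p i).re
        = -(2 * (((starRingEnd ℂ) (a i)) * (H1.mulVec w) i).re)
          - 2 * (((starRingEnd ℂ) (a i)) * (H2.mulVec a) i).im := by
      intro i
      rw [hw]
      simp only [Pi.add_apply, Pi.neg_apply, Pi.smul_apply, smul_eq_mul]
      simp only [Complex.mul_re, Complex.mul_im, Complex.add_re, Complex.add_im,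
        Complex.neg_re, Complex.neg_im, Complex.I_re, Complex.I_im]
      ring
    have h1 : ft t p = -(2 * U.re) - 2 * S.im := by
      simp only [hftdef]
      rw [Finset.sum_congr rfl fun i _ => hterm i]
      rw [hU, hS, Complex.re_sum, Complex.im_sum, Finset.sum_sub_distrib, Finset.mul_sum,
        Finset.mul_sum]
      rw [Finset.sum_neg_distrib]
    have h2 : gp t p = 2 * U.re := by
      simp only [hgpdef]
      rw [← Complex.re_sum, Finset.sum_add_distrib, ← hU, ← hUconj, Complex.add_re,
        Complex.conj_re]
      ring
    rw [h1, h2, hSreal]; ring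
  -- continuity of f, ft, g, gp
  have hf_cont : Continuous (fun q : ℝ × ℝ => f q.1 q.2) := by
    exact continuous_finset_sum _ fun i _ =>
      Complex.continuous_normSq.comp (hvi_cont i)
  have hft_cont : Continuous (fun q : ℝ × ℝ => ft q.1 q.2) := by
    exact continuous_finset_sum _ fun i _ => continuous_const.mul
      (Complex.continuous_re.comp ((Complex.continuous_conj.comp (hvi_cont i)).mul (hvti_cont i)))
  have hg_cont : Continuous (fun q : ℝ × ℝ => g q.1 q.2) := by
    exact continuous_finset_sum _ fun i _ => Complex.continuous_re.comp
      ((Complex.continuous_conj.comp (hvi_cont i)).mul (hmv_cont H1 _ hv_cont i))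
  have hgp_cont : Continuous (fun q : ℝ × ℝ => gp q.1 q.2) := by
    exact continuous_finset_sum _ fun i _ => Complex.continuous_re.comp
      (((Complex.continuous_conj.comp (hvpi_cont i)).mul (hmv_cont H1 _ hv_cont i)).add
        ((Complex.continuous_conj.comp (hvi_cont i)).mul
          (hmv_cont H1 (fun q => vp q.1 q.2) hvp_cont i)))
  -- vanishing when v = 0
  have hfzero : ∀ t p, v t p = 0 → f t p = 0 := by
    intro t p h; simp [hfdef, h]
  have hftzero : ∀ t p, v t p = 0 → ft t p = 0 := by
    intro t p h; simp [hftdef, h]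
  have hgzero : ∀ t p, v t p = 0 → g t p = 0 := by
    intro t p h; simp [hgdef, h]
  have hgpzero : ∀ t p, v t p = 0 → gp t p = 0 := by
    intro t p h; simp [hgpdef, h, Matrix.mulVec_zero]
  -- derivative of the energy is zero
  have hE0 : ∀ t₀ : ℝ, HasDerivAt (fun t => ∫ p : ℝ, f t p) 0 t₀ := by
    intro t₀
    obtain ⟨K, hK, hKv⟩ := hsupp (Icc (t₀ - 1) (t₀ + 1)) isCompact_Icc
    obtain ⟨r, hr⟩ := hK.isBounded.subset_closedBall 0
    set R := max r 0 with hRdef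
    have hR0 : (0 : ℝ) ≤ R := le_max_right _ _
    have hKR : K ⊆ Icc (-R) R := by
      intro x hx
      have h1 : |x| ≤ r := by simpa [Real.dist_eq] using hr hx
      have h2 : |x| ≤ R := h1.trans (le_max_left _ _)
      rw [mem_Icc]
      exact abs_le.mp h2
    have hvz : ∀ t ∈ Icc (t₀ - 1) (t₀ + 1), ∀ p ∉ Icc (-R) R, v t p = 0 :=
      fun t ht p hp => hKv t ht p fun h => hp (hKR h)
    -- bound from compactness
    obtain ⟨C, hC⟩ := (isCompact_Icc.prod isCompact_Icc :
        IsCompact (Icc (t₀ - 1) (t₀ + 1) ×ˢ Icc (-R) R)).exists_bound_of_continuousOn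
      hft_cont.continuousOn
    have hball : ∀ x ∈ ball t₀ 1, x ∈ Icc (t₀ - 1) (t₀ + 1) := by
      intro x hx
      have : |x - t₀| < 1 := by simpa [Real.dist_eq] using hx
      have := abs_lt.mp this
      constructor <;> linarith [this.1, this.2]
    have hint0 : ∫ p : ℝ, ft t₀ p = 0 := by
      have ht₀mem : t₀ ∈ Icc (t₀ - 1) (t₀ + 1) := by constructor <;> linarith
      have hg_supp : HasCompactSupport (fun p => g t₀ p) :=
        HasCompactSupport.intro isCompact_Icc fun p hp => hgzero t₀ p (hvz t₀ ht₀mem p hp)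
      have hgp_supp : HasCompactSupport (fun p => gp t₀ p) :=
        HasCompactSupport.intro isCompact_Icc fun p hp => hgpzero t₀ p (hvz t₀ ht₀mem p hp)
      have hgint : Integrable (fun p => g t₀ p) :=
        (hg_cont.comp (Continuous.prodMk_right t₀)).integrable_of_hasCompactSupport hg_supp
      have hgpint : Integrable (fun p => gp t₀ p) :=
        (hgp_cont.comp (Continuous.prodMk_right t₀)).integrable_of_hasCompactSupport hgp_supp
      have hz : ∫ p : ℝ, gp t₀ p = 0 :=
        integral_eq_zero_of_hasDerivAt_of_integrable (fun p => hgp t₀ p) hgpint hgint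
      calc ∫ p : ℝ, ft t₀ p = ∫ p : ℝ, -(gp t₀ p) := by simp only [key]
        _ = - ∫ p : ℝ, gp t₀ p := integral_neg _
        _ = 0 := by rw [hz, neg_zero]
    have main := (hasDerivAt_integral_of_dominated_loc_of_deriv_le (s := ball t₀ 1)
      (F := fun t p => f t p) (F' := fun t p => ft t p)
      (bound := (Icc (-R) R).indicator fun _ => |C|) (μ := volume) (x₀ := t₀)
      (ball_mem_nhds t₀ one_pos)
      (Filter.Eventually.of_forall fun x =>
        (hf_cont.comp (Continuous.prodMk_right x)).aestronglyMeasurable)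
      ((hf_cont.comp (Continuous.prodMk_right t₀)).integrable_of_hasCompactSupport
        (HasCompactSupport.intro isCompact_Icc fun p hp =>
          hfzero t₀ p (hvz t₀ (by constructor <;> linarith) p hp)))
      ((hft_cont.comp (Continuous.prodMk_right t₀)).aestronglyMeasurable)
      (Filter.Eventually.of_forall fun p => by
        intro x hx
        by_cases hp : p ∈ Icc (-R) R
        · rw [indicator_of_mem hp]
          exact (hC (x, p) ⟨hball x hx, hp⟩).trans (le_abs_self C)
        · rw [indicator_of_notMem hp]
          have hz := hftzero x p (hvz x (hball x hx) p hp)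
          simp [hz])
      (by
        rw [integrable_indicator_iff measurableSet_Icc]
        exact integrableOn_const measure_Icc_lt_top.ne)
      (Filter.Eventually.of_forall fun p x _ => hft x p)).2
    rwa [hint0] at main
  -- conclude
  intro t
  have heq : ∀ s : ℝ, (∫ p : ℝ, (euclNorm (v s p)) ^ 2) = ∫ p : ℝ, f s p := by
    intro s
    have hx : ∀ x : Fin n → ℂ, (euclNorm x) ^ 2 = ∑ i, Complex.normSq (x i) := by
      intro x
      rw [euclNorm, Real.sq_sqrt (Finset.sum_nonneg fun i _ => sq_nonneg _)]
      exact Finset.sum_congr rfl fun i _ => by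
        simp [Complex.sq_norm]
    simp only [hx, hfdef]
  rw [heq t, heq 0]
  exact is_const_of_deriv_eq_zero (fun s => (hE0 s).differentiableAt)
    (fun s => (hE0 s).deriv) t 0
end

section
/- Let $H_1$ be an $n\times n$ complex Hermitian negative semi-definite matrix with spectral decomposition $H_1 = Q\Lambda Q^\dagger$, $Q$ unitary, $\Lambda = \mathrm{diag}(\lambda_1,\dots,\lambda_n)$ with all $\lambda_i \le 0$. For $u_0\in\mathbb{C}^n$, $u_0\neq 0$, define the explicit warped solution $v(t,p) := Q\,\mathrm{diag}\big(e^{-|p-\lambda_1 t|},\dots,e^{-|p-\lambda_n t|}\big)\,Q^\dagger u_0$ and let $u(t) := \exp(tH_1)u_0$. Then for every $t\ge 0$, $$\frac{\int_0^{\infty}\|v(t,p)\|^2\,dp}{\int_{-\infty}^{\infty}\|v(t,p)\|^2\,dp} = \frac{1}{2}\Big(\frac{\|u(t)\|}{\|u_0\|}\Big)^2.$$ -/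
open Matrix MeasureTheory

lemma sum_sq_mulVec {n : ℕ} {Q : Matrix (Fin n) (Fin n) ℂ}
    (hQ1 : Qᴴ * Q = 1) (x : Fin n → ℂ) :
    ∑ i, ‖(Q *ᵥ x) i‖ ^ 2 = ∑ i, ‖x i‖ ^ 2 := by
  have key : ∀ y : Fin n → ℂ, ((∑ i, ‖y i‖ ^ 2 : ℝ) : ℂ) = star y ⬝ᵥ y := by
    intro y
    push_cast
    refine Finset.sum_congr rfl fun i _ => ?_
    simp only [Pi.star_apply, Complex.star_def]
    rw [← Complex.ofReal_pow, Complex.sq_norm,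
      Complex.normSq_eq_conj_mul_self]
  have h2 : star (Q *ᵥ x) ⬝ᵥ (Q *ᵥ x) = star x ⬝ᵥ x := by
    rw [star_mulVec, dotProduct_mulVec, vecMul_vecMul, hQ1, vecMul_one]
  have := (key (Q *ᵥ x)).trans (h2.trans (key x).symm)
  exact_mod_cast this

lemma exp_smul_eq {n : ℕ} {H1 Q : Matrix (Fin n) (Fin n) ℂ} {l : Fin n → ℝ}
    (hQ2 : Q * Qᴴ = 1)
    (hspec : H1 = Q * Matrix.diagonal (fun i => (l i : ℂ)) * Qᴴ) (t : ℝ) :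
    NormedSpace.exp (t • H1)
      = Q * Matrix.diagonal (fun i => ((Real.exp (l i * t) : ℝ) : ℂ)) * Qᴴ := by
  have hinv : Q⁻¹ = Qᴴ := Matrix.inv_eq_right_inv hQ2
  have hQ1 : Qᴴ * Q = 1 := mul_eq_one_comm.mp hQ2
  have hQu : IsUnit Q := ⟨⟨Q, Qᴴ, hQ2, hQ1⟩, rfl⟩
  have hD : t • Matrix.diagonal (fun i => ((l i : ℝ) : ℂ))
      = Matrix.diagonal (fun i => ((l i * t : ℝ) : ℂ)) := by
    have h : (t • fun i => ((l i : ℝ) : ℂ)) = fun i => ((l i * t : ℝ) : ℂ) := by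
      funext i
      rw [Pi.smul_apply, Complex.real_smul]
      push_cast
      ring
    rw [← Matrix.diagonal_smul, h]
  have h1 : t • H1 = Q * Matrix.diagonal (fun i => ((l i * t : ℝ) : ℂ)) * Q⁻¹ := by
    rw [hspec, ← smul_mul_assoc, ← mul_smul_comm, hD, hinv]
  have hDexp : NormedSpace.exp (Matrix.diagonal (fun i => ((l i * t : ℝ) : ℂ)))
      = Matrix.diagonal (fun i => ((Real.exp (l i * t) : ℝ) : ℂ)) := by
    rw [Matrix.exp_diagonal]
    have h : (NormedSpace.exp fun i => ((l i * t : ℝ) : ℂ))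
        = fun i => ((Real.exp (l i * t) : ℝ) : ℂ) := by
      funext i
      rw [Pi.coe_exp, ← Complex.exp_eq_exp_ℂ, Complex.ofReal_exp]
    rw [h]
  calc NormedSpace.exp (t • H1)
      = NormedSpace.exp (Q * Matrix.diagonal (fun i => ((l i * t : ℝ) : ℂ)) * Q⁻¹) := by
        rw [h1]
    _ = Q * NormedSpace.exp (Matrix.diagonal (fun i => ((l i * t : ℝ) : ℂ))) * Q⁻¹ :=
        Matrix.exp_conj Q _ hQu
    _ = Q * Matrix.diagonal (fun i => ((Real.exp (l i * t) : ℝ) : ℂ)) * Qᴴ := by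
        rw [hDexp, hinv]

lemma integrable_exp2abs (a : ℝ) :
    MeasureTheory.Integrable (fun p : ℝ => Real.exp (-(2 * |p - a|))) := by
  have hIoi : IntegrableOn (fun x : ℝ => Real.exp (-(2 * |x|))) (Set.Ioi 0) :=
    (exp_neg_integrableOn_Ioi 0 two_pos).congr_fun
      (fun x hx => by rw [abs_of_pos hx, ← neg_mul]) measurableSet_Ioi
  have hIic : IntegrableOn (fun x : ℝ => Real.exp (-(2 * |x|))) (Set.Iic 0) := by
    rw [← Measure.map_neg_eq_self (volume : Measure ℝ)]
    have m : MeasurableEmbedding fun x : ℝ => -x := (Homeomorph.neg ℝ).measurableEmbedding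
    rw [m.integrableOn_map_iff]
    simp_rw [Function.comp_def, abs_neg, Set.neg_preimage, Set.neg_Iic, neg_zero]
    exact Iff.mpr integrableOn_Ici_iff_integrableOn_Ioi hIoi
  have h0 : MeasureTheory.Integrable (fun x : ℝ => Real.exp (-(2 * |x|))) := by
    have := hIic.union hIoi
    rwa [Set.Iic_union_Ioi, integrableOn_univ] at this
  exact h0.comp_sub_right a

lemma integral_Ioi_exp2abs {a : ℝ} (ha : a ≤ 0) :
    ∫ p in Set.Ioi (0 : ℝ), Real.exp (-(2 * |p - a|)) = Real.exp (2 * a) / 2 := by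
  have h1 : ∀ p ∈ Set.Ioi (0 : ℝ),
      Real.exp (-(2 * |p - a|)) = Real.exp (2 * a) * Real.exp (-(2 * p)) := by
    intro p hp
    rw [abs_of_nonneg (by simp only [Set.mem_Ioi] at hp; linarith : (0:ℝ) ≤ p - a),
      ← Real.exp_add]
    ring_nf
  rw [setIntegral_congr_fun measurableSet_Ioi h1, MeasureTheory.integral_const_mul]
  have h2 : ∫ p in Set.Ioi (0 : ℝ), Real.exp (-(2 * p)) = 1 / 2 := by
    have := integral_comp_mul_left_Ioi (fun x => Real.exp (-x)) 0 two_pos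
    simp only [mul_zero, smul_eq_mul] at this
    rw [this, integral_exp_neg_Ioi_zero]
    norm_num
  rw [h2]
  ring

lemma integral_exp2abs (a : ℝ) : ∫ p : ℝ, Real.exp (-(2 * |p - a|)) = 1 := by
  have h := integral_sub_right_eq_self (μ := volume) (fun x : ℝ => Real.exp (-(2 * |x|))) a
  rw [h, integral_comp_abs (f := fun x => Real.exp (-(2 * x)))]
  have h2 : ∫ p in Set.Ioi (0 : ℝ), Real.exp (-(2 * p)) = 1 / 2 := by
    have := integral_comp_mul_left_Ioi (fun x => Real.exp (-x)) 0 two_pos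
    simp only [mul_zero, smul_eq_mul] at this
    rw [this, integral_exp_neg_Ioi_zero]
    norm_num
  rw [h2]
  norm_num

theorem stmt4 {n : ℕ} (H1 Q : Matrix (Fin n) (Fin n) ℂ) (l : Fin n → ℝ)
    (hH1 : H1.IsHermitian) (hQ : Q ∈ Matrix.unitaryGroup (Fin n) ℂ)
    (hspec : H1 = Q * Matrix.diagonal (fun i => (l i : ℂ)) * Qᴴ)
    (hneg : ∀ i, l i ≤ 0)
    (u0 : Fin n → ℂ) (hu0 : u0 ≠ 0)
    (v : ℝ → ℝ → Fin n → ℂ)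
    (hv : ∀ t p : ℝ, v t p =
      (Q * Matrix.diagonal (fun i => (Real.exp (-|p - l i * t|) : ℂ)) * Qᴴ).mulVec u0)
    (u : ℝ → Fin n → ℂ)
    (hu : ∀ t : ℝ, u t = (NormedSpace.exp (t • H1)).mulVec u0) :
    ∀ t : ℝ, 0 ≤ t →
      (∫ p in Set.Ioi (0 : ℝ), (euclNorm (v t p)) ^ 2) / (∫ p : ℝ, (euclNorm (v t p)) ^ 2)
        = (1 / 2) * (euclNorm (u t) / euclNorm u0) ^ 2 := by
  intro t ht
  have hQ1 : Qᴴ * Q = 1 := by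
    have := hQ.1
    rwa [Matrix.star_eq_conjTranspose] at this
  have hQ2 : Q * Qᴴ = 1 := by
    have := hQ.2
    rwa [Matrix.star_eq_conjTranspose] at this
  set w := Qᴴ *ᵥ u0 with hw
  have hexp2 : ∀ s : ℝ, Real.exp s ^ 2 = Real.exp (2 * s) := fun s => by
    rw [sq, ← Real.exp_add, two_mul]
  -- pointwise representation of v
  have hvrep : ∀ p, v t p = Q *ᵥ (fun i => ((Real.exp (-|p - l i * t|) : ℝ) : ℂ) * w i) := by
    intro p
    rw [hv t p]
    have hD : (Matrix.diagonal (fun i => ((Real.exp (-|p - l i * t|) : ℝ) : ℂ))) *ᵥ w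
        = fun i => ((Real.exp (-|p - l i * t|) : ℝ) : ℂ) * w i :=
      funext fun i => Matrix.mulVec_diagonal _ _ _
    rw [← Matrix.mulVec_mulVec, ← Matrix.mulVec_mulVec, ← hw, hD]
  have hnv : ∀ p, euclNorm (v t p) ^ 2
      = ∑ i, Real.exp (-(2 * |p - l i * t|)) * ‖w i‖ ^ 2 := by
    intro p
    rw [euclNorm, Real.sq_sqrt (Finset.sum_nonneg fun i _ => sq_nonneg _), hvrep p,
      sum_sq_mulVec hQ1]
    refine Finset.sum_congr rfl fun i _ => ?_
    rw [norm_mul, mul_pow, Complex.norm_real, Real.norm_eq_abs, Real.abs_exp, hexp2]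
    ring_nf
  -- representation of u
  have hurep : u t = Q *ᵥ (fun i => ((Real.exp (l i * t) : ℝ) : ℂ) * w i) := by
    rw [hu t, exp_smul_eq hQ2 hspec t]
    have hD : (Matrix.diagonal (fun i => ((Real.exp (l i * t) : ℝ) : ℂ))) *ᵥ w
        = fun i => ((Real.exp (l i * t) : ℝ) : ℂ) * w i :=
      funext fun i => Matrix.mulVec_diagonal _ _ _
    rw [← Matrix.mulVec_mulVec, ← Matrix.mulVec_mulVec, ← hw, hD]
  have hnu : euclNorm (u t) ^ 2 = ∑ i, Real.exp (2 * (l i * t)) * ‖w i‖ ^ 2 := by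
    rw [euclNorm, Real.sq_sqrt (Finset.sum_nonneg fun i _ => sq_nonneg _), hurep,
      sum_sq_mulVec hQ1]
    refine Finset.sum_congr rfl fun i _ => ?_
    rw [norm_mul, mul_pow, Complex.norm_real, Real.norm_eq_abs, Real.abs_exp, hexp2]
  have hu0w : u0 = Q *ᵥ w := by
    rw [hw, Matrix.mulVec_mulVec, hQ2, Matrix.one_mulVec]
  have hnu0 : euclNorm u0 ^ 2 = ∑ i, ‖w i‖ ^ 2 := by
    rw [euclNorm, Real.sq_sqrt (Finset.sum_nonneg fun i _ => sq_nonneg _), hu0w,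
      sum_sq_mulVec hQ1]
  have hT : 0 < ∑ i, ‖w i‖ ^ 2 := by
    obtain ⟨i, hi⟩ := Function.ne_iff.mp hu0
    have h1 : (0:ℝ) < ∑ i, ‖u0 i‖ ^ 2 :=
      Finset.sum_pos' (fun j _ => sq_nonneg _)
        ⟨i, Finset.mem_univ i, pow_pos (norm_pos_iff.mpr hi) 2⟩
    have h2 : ∑ i, ‖u0 i‖ ^ 2 = ∑ i, ‖w i‖ ^ 2 := by
      rw [hu0w, sum_sq_mulVec hQ1]
    linarith [h2 ▸ h1]
  have ha : ∀ i, l i * t ≤ 0 := fun i => mul_nonpos_of_nonpos_of_nonneg (hneg i) ht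
  have hint : ∀ i : Fin n,
      MeasureTheory.Integrable (fun p : ℝ => Real.exp (-(2 * |p - l i * t|)) * ‖w i‖ ^ 2) :=
    fun i => (integrable_exp2abs _).mul_const _
  have hnum : (∫ p in Set.Ioi (0 : ℝ), euclNorm (v t p) ^ 2)
      = ∑ i, (Real.exp (2 * (l i * t)) / 2) * ‖w i‖ ^ 2 := by
    rw [show (fun p : ℝ => euclNorm (v t p) ^ 2)
        = fun p : ℝ => ∑ i, Real.exp (-(2 * |p - l i * t|)) * ‖w i‖ ^ 2 from funext hnv]
    rw [integral_finset_sum _ (fun i _ => (hint i).restrict)]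
    refine Finset.sum_congr rfl fun i _ => ?_
    rw [integral_mul_const, integral_Ioi_exp2abs (ha i)]
  have hden : (∫ p : ℝ, euclNorm (v t p) ^ 2) = ∑ i, ‖w i‖ ^ 2 := by
    rw [show (fun p : ℝ => euclNorm (v t p) ^ 2)
        = fun p : ℝ => ∑ i, Real.exp (-(2 * |p - l i * t|)) * ‖w i‖ ^ 2 from funext hnv]
    rw [integral_finset_sum _ (fun i _ => hint i)]
    refine Finset.sum_congr rfl fun i _ => ?_
    rw [integral_mul_const, integral_exp2abs, one_mul]
  rw [hnum, hden, div_pow, hnu, hnu0]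
  rw [show (∑ i, (Real.exp (2 * (l i * t)) / 2) * ‖w i‖ ^ 2)
      = (1 / 2) * ∑ i, Real.exp (2 * (l i * t)) * ‖w i‖ ^ 2 by
    rw [Finset.mul_sum]; exact Finset.sum_congr rfl fun i _ => by ring]
  rw [mul_div_assoc]
end

section
/- Let $H_1$ be an $n\times n$ complex Hermitian matrix with spectral decomposition $H_1 = Q\Lambda Q^\dagger$, $Q$ unitary, $\Lambda = \mathrm{diag}(\lambda_1,\dots,\lambda_n)$ real, and set $\lambda_+ := \max\{0,\lambda_1,\dots,\lambda_n\}$. For $u_0\in\mathbb{C}^n$ define the explicit warped solution $v(t,p) := Q\,\mathrm{diag}\big(e^{-|p-\lambda_1 t|},\dots,e^{-|p-\lambda_n t|}\big)\,Q^\dagger u_0$. Then for every $t\ge 0$ and every $p \ge \max\{\lambda_+ t, 0\}$, the solution of $u' = H_1 u$, $u(0)=u_0$, is restored by $\exp(tH_1)u_0 = e^{p}\,v(t,p)$. -/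
open Matrix

/-- for Hermitian `H₁ = Q Λ Q†` with real diagonal `Λ` and
`λ₊ = max{0, λ₁, …, λₙ}`, the explicit warped solution
`v(t,p) = Q diag(e^{-|p-λᵢt|}) Q† u₀` restores the solution of `u' = H₁u`,
`u(0) = u₀` via `exp(tH₁)u₀ = eᵖ v(t,p)` for all `t ≥ 0` and
`p ≥ max{λ₊ t, 0}`. -/
theorem stmt5 {n : ℕ} (H1 Q : Matrix (Fin n) (Fin n) ℂ) (l : Fin n → ℝ)
    (hH1 : H1.IsHermitian) (hQ : Q ∈ Matrix.unitaryGroup (Fin n) ℂ)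
    (hspec : H1 = Q * Matrix.diagonal (fun i => (l i : ℂ)) * Qᴴ)
    (lp : ℝ) (hlp0 : 0 ≤ lp) (hlpub : ∀ i, l i ≤ lp)
    (hlpmem : lp = 0 ∨ ∃ i, lp = l i)
    (u0 : Fin n → ℂ)
    (v : ℝ → ℝ → Fin n → ℂ)
    (hv : ∀ t p : ℝ, v t p =
      (Q * Matrix.diagonal (fun i => (Real.exp (-|p - l i * t|) : ℂ)) * Qᴴ).mulVec u0) :
    ∀ t : ℝ, 0 ≤ t → ∀ p : ℝ, max (lp * t) 0 ≤ p →
      (NormedSpace.exp (t • H1)).mulVec u0 = Real.exp p • v t p := by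
  intro t ht p hp
  have hQQ : Q * Qᴴ = 1 := by
    simpa [Matrix.star_eq_conjTranspose] using hQ.2
  have hQinv : Q⁻¹ = Qᴴ := by
    apply Matrix.inv_eq_left_inv
    simpa [Matrix.star_eq_conjTranspose] using hQ.1
  have hQunit : IsUnit Q :=
    (Matrix.isUnit_iff_isUnit_det Q).mpr
      (IsUnit.of_mul_eq_one Qᴴ.det
        (by rw [← Matrix.det_mul, hQQ, Matrix.det_one]))
  have hlhs : NormedSpace.exp (t • H1)
      = Q * Matrix.diagonal (fun i => (Real.exp (l i * t) : ℂ)) * Qᴴ := by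
    have h1 : t • H1 = Q * Matrix.diagonal (fun i => ((l i * t : ℝ) : ℂ)) * Q⁻¹ := by
      have hd : (t • fun i => ((l i : ℂ))) = fun i => ((l i * t : ℝ) : ℂ) := by
        funext i
        rw [Pi.smul_apply, Complex.real_smul]
        push_cast
        ring
      rw [hspec, hQinv, ← Matrix.smul_mul, ← Matrix.mul_smul, ← Matrix.diagonal_smul, hd]
    have hd2 : (fun i => NormedSpace.exp ((l i * t : ℝ) : ℂ))
        = fun i => ((Real.exp (l i * t) : ℝ) : ℂ) := by
      funext i
      rw [← Complex.exp_eq_exp_ℂ, ← Complex.ofReal_exp]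
    rw [h1, Matrix.exp_conj Q _ hQunit, hQinv, Matrix.exp_diagonal, Pi.exp_def, hd2]
  have habs : ∀ i, |p - l i * t| = p - l i * t := by
    intro i
    rw [abs_of_nonneg]
    have : l i * t ≤ lp * t := mul_le_mul_of_nonneg_right (hlpub i) ht
    linarith [le_trans (le_max_left (lp * t) 0) hp]
  have hmat : (Real.exp p : ℂ) •
      (Q * Matrix.diagonal (fun i => (Real.exp (-|p - l i * t|) : ℂ)) * Qᴴ)
      = Q * Matrix.diagonal (fun i => (Real.exp (l i * t) : ℂ)) * Qᴴ := by
    have hd3 : ((Real.exp p : ℂ) • fun i => ((Real.exp (-|p - l i * t|) : ℝ) : ℂ))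
        = fun i => ((Real.exp (l i * t) : ℝ) : ℂ) := by
      funext i
      rw [Pi.smul_apply, smul_eq_mul, habs i, ← Complex.ofReal_mul, ← Real.exp_add]
      ring_nf
    rw [← Matrix.smul_mul, ← Matrix.mul_smul, ← Matrix.diagonal_smul, hd3]
  rw [hlhs, hv, ← hmat, Matrix.smul_mulVec]
  funext i
  rw [Pi.smul_apply, Pi.smul_apply, Complex.real_smul, smul_eq_mul]
end

section
/- Let $H_1$ be an $n\times n$ complex Hermitian negative semi-definite matrix with spectral decomposition $H_1 = Q\Lambda Q^\dagger$, $Q$ unitary, $\Lambda = \mathrm{diag}(\lambda_1,\dots,\lambda_n)$ with all $\lambda_i\le 0$. For $t\ge 0$ define the transport propagator $T_t$ on functions $w:\mathbb{R}\to\mathbb{C}^n$ by $(T_t w)(p) := Q\,\big((Q^\dagger w)_i(p-\lambda_i t)\big)_{i=1}^n$. If $w:\mathbb{R}\to\mathbb{C}^n$ and $u\in\mathbb{C}^n$ satisfy $w(p) = e^{-p}u$ for all $p\ge 0$, then for every $t\ge 0$ and every $p\ge 0$, $(T_t w)(p) = e^{-p}\,\exp(tH_1)\,u$. -/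
open Matrix

/-- for Hermitian negative semi-definite `H₁ = Q Λ Q†` (all
`λᵢ ≤ 0`), the transport propagator
`(T_t w)(p) = Q ((Q† w)ᵢ(p - λᵢ t))ᵢ` applied to a function satisfying
`w(p) = e^{-p} u` for `p ≥ 0` yields `(T_t w)(p) = e^{-p} exp(tH₁) u` for all
`t ≥ 0`, `p ≥ 0`. -/
theorem stmt8 {n : ℕ} (H1 Q : Matrix (Fin n) (Fin n) ℂ) (l : Fin n → ℝ)
    (hH1 : H1.IsHermitian) (hQ : Q ∈ Matrix.unitaryGroup (Fin n) ℂ)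
    (hspec : H1 = Q * Matrix.diagonal (fun i => (l i : ℂ)) * Qᴴ)
    (hneg : ∀ i, l i ≤ 0)
    (T : ℝ → (ℝ → Fin n → ℂ) → (ℝ → Fin n → ℂ))
    (hT : ∀ (t : ℝ) (w : ℝ → Fin n → ℂ) (p : ℝ),
      T t w p = Q.mulVec (fun i => Qᴴ.mulVec (w (p - l i * t)) i))
    (w : ℝ → Fin n → ℂ) (u : Fin n → ℂ)
    (hw : ∀ p : ℝ, 0 ≤ p → w p = Real.exp (-p) • u) :
    ∀ t : ℝ, 0 ≤ t → ∀ p : ℝ, 0 ≤ p →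
      T t w p = Real.exp (-p) • (NormedSpace.exp (t • H1)).mulVec u := by
  intro t ht p hp
  have hQinv : Q⁻¹ = Qᴴ := by
    rw [Matrix.inv_eq_left_inv]
    exact Matrix.mem_unitaryGroup_iff'.mp hQ
  have hQunit : IsUnit Q :=
    ⟨⟨Q, Qᴴ, Matrix.mem_unitaryGroup_iff.mp hQ, Matrix.mem_unitaryGroup_iff'.mp hQ⟩, rfl⟩
  have hsmul : t • H1 = Q * Matrix.diagonal (fun i => ((t * l i : ℝ) : ℂ)) * Qᴴ := by
    rw [hspec, ← Matrix.smul_mul, ← Matrix.mul_smul]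
    congr 2
    ext i j
    by_cases h : i = j <;> simp [Matrix.diagonal, h, Complex.real_smul]
  have key : NormedSpace.exp (t • H1)
      = Q * Matrix.diagonal (fun i => (Complex.exp ((t * l i : ℝ) : ℂ))) * Qᴴ := by
    rw [hsmul, ← hQinv, Matrix.exp_conj Q _ hQunit, Matrix.exp_diagonal]
    rw [Pi.exp_def]
    congr 2
    ext i
    rw [Complex.exp_eq_exp_ℂ]
  have hwval : ∀ i, w (p - l i * t) = Real.exp (-(p - l i * t)) • u := fun i =>
    hw _ (by nlinarith [hneg i])
  have hf : (fun i => (Qᴴ.mulVec (Real.exp (-(p - l i * t)) • u)) i)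
      = Real.exp (-p) • ((Matrix.diagonal fun i => Complex.exp ((t * l i : ℝ) : ℂ)).mulVec
          (Qᴴ.mulVec u)) := by
    funext i
    rw [Matrix.mulVec_smul]
    simp only [Pi.smul_apply, Matrix.mulVec_diagonal, Complex.real_smul, Complex.ofReal_exp]
    rw [← mul_assoc, ← Complex.exp_add]
    congr 2
    push_cast
    ring
  rw [hT, key, ← Matrix.mulVec_mulVec, ← Matrix.mulVec_mulVec]
  simp only [hwval]
  rw [hf, Matrix.mulVec_smul]
end

section
/- Let $H_1, H_2$ be $n\times n$ complex Hermitian matrices with $H_1$ negative semi-definite, with spectral decomposition $H_1 = Q\Lambda Q^\dagger$, $Q$ unitary, $\Lambda = \mathrm{diag}(\lambda_1,\dots,\lambda_n)$, all $\lambda_i\le 0$. Fix $\Delta t > 0$ and $u_0\in\mathbb{C}^n$. Define the exact splitting iterates $u^0 := u_0$, $u^{m+1} := \exp(i\Delta t\, H_2)\exp(\Delta t\, H_1)\,u^m$, and the Schr\"odingerized splitting iterates $v^0(p) := e^{-|p|}u_0$, $v^{m+1} := \exp(i\Delta t\, H_2)\,\big(T_{\Delta t} v^m\big)$, where $(T_t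 w)(p) := Q\,\big((Q^\dagger w)_i(p-\lambda_i t)\big)_{i=1}^n$. Then for every $m\ge 0$ and every $p\ge 0$, $v^m(p) = e^{-p}\,u^m$. -/
open Matrix

/-- with `H₁, H₂` Hermitian, `H₁ = Q Λ Q†` negative semi-definite
(all `λᵢ ≤ 0`), the exact splitting iterates
`u⁰ = u₀`, `u^{m+1} = exp(iΔt H₂) exp(Δt H₁) uᵐ` and the Schrödingerized
splitting iterates `v⁰(p) = e^{-|p|}u₀`,
`v^{m+1} = exp(iΔt H₂) (T_{Δt} vᵐ)` (with the transport propagator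
`(T_t w)(p) = Q ((Q† w)ᵢ(p - λᵢ t))ᵢ`) satisfy `vᵐ(p) = e^{-p} uᵐ` for every
`m ≥ 0` and `p ≥ 0`. -/
theorem stmt9 {n : ℕ} (H1 H2 Q : Matrix (Fin n) (Fin n) ℂ) (l : Fin n → ℝ)
    (hH1 : H1.IsHermitian) (hH2 : H2.IsHermitian)
    (hQ : Q ∈ Matrix.unitaryGroup (Fin n) ℂ)
    (hspec : H1 = Q * Matrix.diagonal (fun i => (l i : ℂ)) * Qᴴ)
    (hneg : ∀ i, l i ≤ 0)
    (Δt : ℝ) (hΔt : 0 < Δt) (u0 : Fin n → ℂ)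
    (T : ℝ → (ℝ → Fin n → ℂ) → (ℝ → Fin n → ℂ))
    (hT : ∀ (t : ℝ) (w : ℝ → Fin n → ℂ) (p : ℝ),
      T t w p = Q.mulVec (fun i => Qᴴ.mulVec (w (p - l i * t)) i))
    (u : ℕ → Fin n → ℂ)
    (hu0 : u 0 = u0)
    (hu : ∀ m : ℕ, u (m + 1) =
      (NormedSpace.exp ((Complex.I * (Δt : ℂ)) • H2)).mulVec
        ((NormedSpace.exp (Δt • H1)).mulVec (u m)))
    (v : ℕ → ℝ → Fin n → ℂ)
    (hv0 : ∀ p : ℝ, v 0 p = Real.exp (-|p|) • u0)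
    (hv : ∀ (m : ℕ) (p : ℝ), v (m + 1) p =
      (NormedSpace.exp ((Complex.I * (Δt : ℂ)) • H2)).mulVec (T Δt (v m) p)) :
    ∀ m : ℕ, ∀ p : ℝ, 0 ≤ p → v m p = Real.exp (-p) • u m := by
  have hQQ : Q * Qᴴ = 1 := by
    simpa [star_eq_conjTranspose] using (Matrix.mem_unitaryGroup_iff.mp hQ)
  have hQ'Q : Qᴴ * Q = 1 := by
    simpa [star_eq_conjTranspose] using (Matrix.mem_unitaryGroup_iff'.mp hQ)
  set U : (Matrix (Fin n) (Fin n) ℂ)ˣ := ⟨Q, Qᴴ, hQQ, hQ'Q⟩ with hU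
  have hUinv : (↑U⁻¹ : Matrix (Fin n) (Fin n) ℂ) = Qᴴ := rfl
  have hE : NormedSpace.exp (Δt • H1)
      = Q * Matrix.diagonal (fun i => Complex.exp (Δt * l i)) * Qᴴ := by
    have hfun : (fun i => ((Δt * l i : ℝ) : ℂ)) = Δt • (fun i => ((l i : ℝ) : ℂ)) := by
      funext i
      simp [Complex.real_smul]
    have h1 : Δt • H1 = (U : Matrix (Fin n) (Fin n) ℂ) *
        Matrix.diagonal (fun i => ((Δt * l i : ℝ) : ℂ)) *
        ((U⁻¹ : (Matrix (Fin n) (Fin n) ℂ)ˣ) : Matrix (Fin n) (Fin n) ℂ) := by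
      show Δt • H1 = Q * _ * Qᴴ
      rw [hspec, hfun, Matrix.diagonal_smul, Matrix.mul_smul, Matrix.smul_mul]
    have hd : NormedSpace.exp (fun i => ((Δt * l i : ℝ) : ℂ))
        = fun i => Complex.exp (Δt * l i) := by
      funext i
      rw [Pi.coe_exp, ← Complex.exp_eq_exp_ℂ]
      push_cast
      ring_nf
    rw [h1, Matrix.exp_units_conj, Matrix.exp_diagonal, hd, hUinv]
  have key : ∀ w : Fin n → ℂ,
      Q.mulVec (fun i => Complex.exp (Δt * l i) * Qᴴ.mulVec w i)
        = (NormedSpace.exp (Δt • H1)).mulVec w := by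
    intro w
    rw [hE, ← Matrix.mulVec_mulVec, ← Matrix.mulVec_mulVec]
    refine congrArg Q.mulVec ?_
    funext i
    simp [Matrix.mulVec_diagonal]
  intro m
  induction m with
  | zero => intro p hp; rw [hv0, hu0, abs_of_nonneg hp]
  | succ m ih =>
    intro p hp
    rw [hv, hT, hu]
    have hcomp : (fun i => Qᴴ.mulVec (v m (p - l i * Δt)) i)
        = Real.exp (-p) • fun i => Complex.exp (Δt * l i) * Qᴴ.mulVec (u m) i := by
      funext i
      have hge : 0 ≤ p - l i * Δt := by nlinarith [hneg i]
      rw [ih _ hge, Matrix.mulVec_smul]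
      simp only [Pi.smul_apply, Complex.real_smul, Complex.ofReal_exp, smul_eq_mul]
      rw [← mul_assoc, ← Complex.exp_add]
      congr 2
      push_cast
      ring
    rw [hcomp, Matrix.mulVec_smul, key, Matrix.mulVec_smul]
end
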